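/- Let S ⊆ X × Y and let U = {(x,y) ∈ S : |X(y)| = 1 or |Y(x)| ≤ 2}, where X(y) = {t : (t,y) ∈ S} and Y(x) = {z : (x,z) ∈ S}. Then the WEP holds for S if and only if the WEP holds for S \ U. -/

import Mathlib

open Set

/-- Projection of `S` onto the first coordinate. -/
def SX (S : Set (ℝ × ℝ)) : Set ℝ := Prod.fst '' S

/-- Projection of `S` onto the second coordinate. -/
def SY (S : Set (ℝ × ℝ)) : Set ℝ := Prod.snd '' S

/-- The fiber `Y(x) = {y : (x,y) ∈ S}`. -/
def Yfib (S : Set (ℝ × ℝ)) (x : ℝ) : Set ℝ := {y | (x, y) ∈ S}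

/-- The fiber `X(y) = {x : (x,y) ∈ S}`. -/
def Xfib (S : Set (ℝ × ℝ)) (y : ℝ) : Set ℝ := {x | (x, y) ∈ S}

/-- The weak exact predictable representation property (WEP) for `S`:
every function decomposes as `f(x,y) = φ(x) + h(x)(y-x) - ψ(y)` on `S`. -/
def WEP (S : Set (ℝ × ℝ)) : Prop :=
  ∀ f : ℝ × ℝ → ℝ, ∃ φ h ψ : ℝ → ℝ,
    ∀ p ∈ S, f p = φ p.1 + h p.1 * (p.2 - p.1) - ψ p.2

/-- A set has at most two elements. -/
def AtMostTwo (A : Set ℝ) : Prop := ∀ a ∈ A, ∀ b ∈ A, ∀ c ∈ A, a = b ∨ a = c ∨ b = c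

/-- `S` is 1-erased: every point of `S_X` has at least two image points. -/
def OneErased (S : Set (ℝ × ℝ)) : Prop :=
  ∀ x ∈ SX S, ∃ y₁ y₂ : ℝ, y₁ ≠ y₂ ∧ (x, y₁) ∈ S ∧ (x, y₂) ∈ S

/-- `ψ` is `S`-affine: affine on every fiber `Y(x)`. -/
def SAffine (S : Set (ℝ × ℝ)) (ψ : ℝ → ℝ) : Prop :=
  ∀ x ∈ SX S, ∃ a b : ℝ, ∀ y ∈ Yfib S x, ψ y = a + b * (y - x)

/-- `A` is a 2-net: it is 1-erased and every `A`-affine function is globally affine. -/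
def TwoNet (A : Set (ℝ × ℝ)) : Prop :=
  OneErased A ∧ ∀ ψ : ℝ → ℝ, SAffine A ψ → ∃ α β : ℝ, ∀ y ∈ SY A, ψ y = α + β * y

/-- Two paths are neighbours if they share a coordinate. -/
def Neighbour (p q : ℝ × ℝ) : Prop := p.1 = q.1 ∨ p.2 = q.2

/-- Transitive (reflexive-transitive) closure of the neighbour relation within `S`. -/
def Linked (S : Set (ℝ × ℝ)) (p q : ℝ × ℝ) : Prop :=
  Relation.ReflTransGen (fun a b => a ∈ S ∧ b ∈ S ∧ Neighbour a b) p q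

/-- The 2-link property: some (injective) enumeration of `S_X` such that every new
point shares at most two image points with the union of previous images. -/
def TwoLinkProperty (S : Set (ℝ × ℝ)) : Prop :=
  ∃ (N : Set ℕ) (x : ℕ → ℝ), Set.InjOn x N ∧ x '' N = SX S ∧
    ∀ n ∈ N, AtMostTwo (Yfib S (x n) ∩ ⋃ i ∈ {i ∈ N | i < n}, Yfib S (x i))

/-- The erasure map removing paths `(x,y)` with `|X(y)| = 1`. -/
def E1x (T : Set (ℝ × ℝ)) : Set (ℝ × ℝ) := T \ {p | p ∈ T ∧ Xfib T p.2 = {p.1}}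

/-- The erasure map removing paths `(x,y)` with `|Y(x)| = 1`. -/
def E1y (T : Set (ℝ × ℝ)) : Set (ℝ × ℝ) := T \ {p | p ∈ T ∧ Yfib T p.1 = {p.2}}

/-- The erasure map removing paths `(x,y)` with `|Y(x)| = 2`. -/
def E2y (T : Set (ℝ × ℝ)) : Set (ℝ × ℝ) :=
  T \ {p | p ∈ T ∧ ∃ a b : ℝ, a ≠ b ∧ Yfib T p.1 = {a, b}}

/-- The composite erasure map `E = E_{2,y} ∘ E_{1,y} ∘ E_{1,x}`. -/
def Erase (T : Set (ℝ × ℝ)) : Set (ℝ × ℝ) := E2y (E1y (E1x T))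

/-- `S` is fully erasable: every path is eventually erased. -/
def FullyErasable (S : Set (ℝ × ℝ)) : Prop :=
  ∀ p ∈ S, ∃ n : ℕ, p ∉ Erase^[n] S

/-- `A` is saturated in `S`: every path of `S` with both endpoints in the
projections of `A` belongs to `A`. -/
def SaturatedIn (A S : Set (ℝ × ℝ)) : Prop :=
  ∀ p ∈ S, p.1 ∈ SX A → p.2 ∈ SY A → p ∈ A

/-- An `S`-maximal 2-net. -/
def MaximalTwoNet (S A : Set (ℝ × ℝ)) : Prop :=
  TwoNet A ∧ A ⊆ S ∧ ∀ A' : Set (ℝ × ℝ), TwoNet A' → A' ⊆ S → A ⊆ A' → A' = A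

/-- Reduction lemma: the WEP holds for `S` iff it holds for `S \\ U`. -/
theorem wep_iff_wep_reduced
    (X Y : Set ℝ) (hX : X.Countable) (hY : Y.Countable)
    (hXpos : ∀ x ∈ X, 0 < x) (hYpos : ∀ y ∈ Y, 0 < y)
    (S : Set (ℝ × ℝ)) (hS : S ⊆ X ×ˢ Y)
    (U : Set (ℝ × ℝ))
    (hU : U = {p | p ∈ S ∧ (Xfib S p.2 = {p.1} ∨ AtMostTwo (Yfib S p.1))}) :
    WEP S ↔ WEP (S \ U) := by
  constructor
  · rintro hW f
    obtain ⟨φ, h, ψ, hdec⟩ := hW f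
    exact ⟨φ, h, ψ, fun p hp => hdec p hp.1⟩
  · intro hW f
    classical
    obtain ⟨φ, h, ψ, hdec⟩ := hW f
    set C : ℝ → Prop := fun y => ∃ x, Xfib S y = {x} ∧ ¬ AtMostTwo (Yfib S x) with hCdef
    set ψ' : ℝ → ℝ := fun y =>
      if hc : C y then φ hc.choose + h hc.choose * (y - hc.choose) - f (hc.choose, y)
      else ψ y with hψ'
    set D : ℝ → Prop := fun x => x ∈ SX S ∧ AtMostTwo (Yfib S x) with hDdef
    have key : ∀ x, D x → ∃ ag : ℝ × ℝ,
        ∀ y ∈ Yfib S x, f (x, y) = ag.1 + ag.2 * (y - x) - ψ' y := by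
      intro x hx
      obtain ⟨hxS, h2⟩ := hx
      obtain ⟨p, hpS, hp1⟩ := hxS
      have hy1 : p.2 ∈ Yfib S x := by
        show (x, p.2) ∈ S
        rw [← hp1]
        simpa using hpS
      set y1 := p.2
      by_cases h2' : ∃ y2 ∈ Yfib S x, y2 ≠ y1
      · obtain ⟨y2, hy2, hne⟩ := h2'
        have hsub : y1 - y2 ≠ 0 := sub_ne_zero.mpr (Ne.symm hne)
        refine ⟨(f (x, y1) + ψ' y1 -
            (f (x, y1) + ψ' y1 - (f (x, y2) + ψ' y2)) / (y1 - y2) * (y1 - x),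
            (f (x, y1) + ψ' y1 - (f (x, y2) + ψ' y2)) / (y1 - y2)), ?_⟩
        intro y hy
        have hcases : y = y1 ∨ y = y2 := by
          rcases h2 y hy y1 hy1 y2 hy2 with hh | hh | hh
          · exact Or.inl hh
          · exact Or.inr hh
          · exact absurd hh.symm hne
        rcases hcases with rfl | rfl
        · field_simp
          ring
        · field_simp
          ring
      · push_neg at h2'
        refine ⟨(f (x, y1) + ψ' y1, 0), ?_⟩
        intro y hy
        have := h2' y hy
        subst this
        ring
    refine ⟨fun x => if hd : D x then (key x hd).choose.1 else φ x,
            fun x => if hd : D x then (key x hd).choose.2 else h x, ψ', ?_⟩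
    rintro ⟨x, y⟩ hpS
    by_cases hdx : D x
    · simp only [dif_pos hdx]
      exact (key x hdx).choose_spec y hpS
    · have hxS : x ∈ SX S := ⟨(x, y), hpS, rfl⟩
      have hnot2 : ¬ AtMostTwo (Yfib S x) := fun hh => hdx ⟨hxS, hh⟩
      simp only [dif_neg hdx]
      by_cases hpU : (x, y) ∈ U
      · have hfib : Xfib S y = {x} := by
          rw [hU] at hpU
          rcases hpU.2 with hh | hh
          · exact hh
          · exact absurd hh hnot2
        have hcy : C y := ⟨x, hfib, hnot2⟩
        have hx' : hcy.choose = x := by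
          have h1 : Xfib S y = {hcy.choose} := hcy.choose_spec.1
          have : x ∈ ({hcy.choose} : Set ℝ) := by rw [← h1]; exact hpS
          exact (this.symm : hcy.choose = x)
        simp only [hψ', dif_pos hcy, hx']
        ring
      · have hpd : (x, y) ∈ S \ U := ⟨hpS, hpU⟩
        have hncy : ¬ C y := by
          rintro ⟨x', hfib, -⟩
          have hxx : x ∈ ({x'} : Set ℝ) := by rw [← hfib]; exact hpS
          apply hpU
          rw [hU]
          exact ⟨hpS, Or.inl (by rw [hfib, hxx])⟩
        simp only [hψ', dif_neg hncy]
        exact hdec (x, y) hpd
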